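/- (Lemma 2.13, inequality (2.10).) Let n ≥ 2 and 2 ≤ k ≤ n. For all real numbers b > 0 and B > 0 there exists a constant C > 0, depending only on n, k, b, B, with the following property: if λ ∈ Γ_{k-1} and β_0,…,β_{k-1} are real numbers with b ≤ β_l ≤ B for all 0 ≤ l ≤ k−2 and |β_{k-1}| ≤ B, satisfying σ_k(λ)/σ_{k-1}(λ) = Σ_{l=0}^{k-2} β_l · σ_l(λ)/σ_{k-1}(λ) + β_{k-1}, then −B ≤ σ_k(λ)/σ_{k-1}(λ) ≤ C. -/

import Mathlib

/-- The `k`-th elementary symmetric function of a vector `lam ∈ ℝⁿ`. -/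
noncomputable def esymm (n k : ℕ) (lam : Fin n → ℝ) : ℝ :=
  ∑ s ∈ Finset.powersetCard k (Finset.univ : Finset (Fin n)), ∏ i ∈ s, lam i

/-- The Gårding cone `Γ_k = {λ ∈ ℝⁿ : σ_j(λ) > 0 for all 1 ≤ j ≤ k}`. -/
def GammaCone (n k : ℕ) : Set (Fin n → ℝ) :=
  {lam | ∀ j : ℕ, 1 ≤ j → j ≤ k → 0 < esymm n j lam}

open Polynomial in
/-- For a real polynomial that splits as a product of linear factors,
the bottom coefficients satisfy `2 a₀ a₂ ≤ a₁²`. -/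
lemma coeff_quad_ineq (s : Multiset ℝ) :
    2 * ((s.map fun a => X - C a).prod.coeff 0) * ((s.map fun a => X - C a).prod.coeff 2)
      ≤ ((s.map fun a => X - C a).prod.coeff 1) ^ 2 := by
  induction s using Multiset.induction_on with
  | empty => norm_num [Polynomial.coeff_one]
  | cons a s ih =>
    rw [Multiset.map_cons, Multiset.prod_cons]
    set p := (s.map fun a => X - C a).prod with hp
    have e : (X - C a) * p = X * p - C a * p := by ring
    have hX0 : (X * p).coeff 0 = 0 := by
      rw [mul_coeff_zero, coeff_X_zero, zero_mul]
    have hX1 : (X * p).coeff 1 = p.coeff 0 := coeff_X_mul p 0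
    have hX2 : (X * p).coeff 2 = p.coeff 1 := coeff_X_mul p 1
    have h0 : ((X - C a) * p).coeff 0 = -(a * p.coeff 0) := by
      rw [e, coeff_sub, hX0, coeff_C_mul]; ring
    have h1 : ((X - C a) * p).coeff 1 = p.coeff 0 - a * p.coeff 1 := by
      rw [e, coeff_sub, hX1, coeff_C_mul]
    have h2 : ((X - C a) * p).coeff 2 = p.coeff 1 - a * p.coeff 2 := by
      rw [e, coeff_sub, hX2, coeff_C_mul]
    rw [h0, h1, h2]
    nlinarith [sq_nonneg (p.coeff 0),
      mul_nonneg (sq_nonneg a) (by linarith : (0:ℝ) ≤ p.coeff 1 ^ 2 - 2 * p.coeff 0 * p.coeff 2)]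

open Polynomial in
lemma roots_card_le_iterate (p : Polynomial ℝ) (N : ℕ) :
    Multiset.card p.roots ≤ Multiset.card ((derivative^[N]) p).roots + N := by
  induction N with
  | zero => simp
  | succ i ih =>
    rw [Function.iterate_succ_apply']
    have := Polynomial.card_roots_le_derivative (derivative^[i] p)
    omega

section NewtonIneq
open Polynomial
set_option maxHeartbeats 1000000

/-- Newton-type inequality: for every real vector, `σ_j σ_{j+2} ≤ σ_{j+1}²`. -/
lemma esymm_newton (n : ℕ) (lam : Fin n → ℝ) (j : ℕ) (hj : j + 2 ≤ n) :
    esymm n j lam * esymm n (j + 2) lam ≤ esymm n (j + 1) lam ^ 2 := by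
  classical
  set P : Polynomial ℝ := ∏ i : Fin n, (X + C (lam i)) with hP
  have hPdeg : P.natDegree = n := by
    rw [hP, natDegree_prod_of_monic _ _ (fun i _ => monic_X_add_C _)]
    simp [natDegree_X_add_C]
  have hPsplits : P.Splits := by
    apply Splits.prod
    intro i _
    have h : X + C (lam i) = X - C (-lam i) := by rw [map_neg, sub_neg_eq_add]
    rw [h]; exact Splits.X_sub_C _
  have hProots : Multiset.card P.roots = n := by
    rw [← hPdeg]; exact splits_iff_card_roots.mp hPsplits
  set N := n - (j + 2) with hN
  set Q := (derivative^[N]) P with hQ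
  have hQdeg : Q.natDegree ≤ j + 2 := by
    have h := natDegree_iterate_derivative P N
    rw [← hQ] at h
    omega
  have hQroots_ge : j + 2 ≤ Multiset.card Q.roots := by
    have h := roots_card_le_iterate P N
    rw [← hQ] at h
    omega
  have hQcard : Multiset.card Q.roots = Q.natDegree := by
    have h := card_roots' Q
    omega
  have hQsplits : Q.Splits := splits_iff_card_roots.mpr hQcard
  have hQeq := hQsplits.eq_prod_roots
  have hkeyQ : 2 * Q.coeff 0 * Q.coeff 2 ≤ Q.coeff 1 ^ 2 := by
    have h := coeff_quad_ineq Q.roots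
    have hc : ∀ m, Q.coeff m = Q.leadingCoeff * ((Q.roots.map fun a => X - C a).prod.coeff m) := by
      intro m
      conv_lhs => rw [hQeq]
      rw [coeff_C_mul]
    rw [hc 0, hc 1, hc 2]
    nlinarith [mul_le_mul_of_nonneg_left h (sq_nonneg Q.leadingCoeff)]
  -- coefficients of Q in terms of esymm
  have hPcoeff : ∀ m, m ≤ j + 2 → P.coeff (m + N) = esymm n (j + 2 - m) lam := by
    intro m hm
    have hcard : (Finset.univ : Finset (Fin n)).card = n := by simp
    have hle : m + N ≤ (Finset.univ : Finset (Fin n)).card := by omega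
    rw [hP, Finset.prod_X_add_C_coeff Finset.univ lam hle, esymm]
    have h2 : (Finset.univ : Finset (Fin n)).card - (m + N) = j + 2 - m := by omega
    rw [h2]
  have hQcoeff : ∀ m, m ≤ j + 2 →
      Q.coeff m = ((m + N).descFactorial N : ℝ) * esymm n (j + 2 - m) lam := by
    intro m hm
    rw [hQ, Polynomial.coeff_iterate_derivative, hPcoeff m hm, nsmul_eq_mul]
  -- factorial facts
  have key0 : N.descFactorial N = Nat.factorial N := Nat.descFactorial_self N
  have key1 : (1 + N).descFactorial N = Nat.factorial (1 + N) := by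
    have h := Nat.factorial_mul_descFactorial (show N ≤ 1 + N by omega)
    have h1 : 1 + N - N = 1 := by omega
    rw [h1] at h
    simpa using h
  have key2 : 2 * (2 + N).descFactorial N = Nat.factorial (2 + N) := by
    have h := Nat.factorial_mul_descFactorial (show N ≤ 2 + N by omega)
    have h1 : 2 + N - N = 2 := by omega
    rw [h1] at h
    simpa [Nat.factorial] using h
  have f1 : Nat.factorial (1 + N) = (N + 1) * Nat.factorial N := by
    rw [show 1 + N = N + 1 by omega, Nat.factorial_succ]
  have f2 : Nat.factorial (2 + N) = (N + 2) * Nat.factorial (1 + N) := by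
    rw [show 2 + N = (1 + N) + 1 by omega, Nat.factorial_succ, show 1 + N + 1 = N + 2 by omega]
  have hnat : (1 + N).descFactorial N * (1 + N).descFactorial N
      ≤ 2 * N.descFactorial N * (2 + N).descFactorial N := by
    have h2 : 2 * N.descFactorial N * (2 + N).descFactorial N
        = Nat.factorial N * (Nat.factorial (2 + N)) := by
      rw [key0, ← key2]; ring
    rw [key1, h2, f2, f1]
    nlinarith [Nat.factorial_pos N, Nat.factorial_pos (1 + N)]
  -- put it together
  have e0 := hQcoeff 0 (by omega)
  have e1 := hQcoeff 1 (by omega)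
  have e2 := hQcoeff 2 (by omega)
  rw [show j + 2 - 0 = j + 2 by omega, Nat.zero_add] at e0
  rw [show j + 2 - 1 = j + 1 by omega] at e1
  rw [show j + 2 - 2 = j by omega] at e2
  rw [e0, e1, e2] at hkeyQ
  set c0 : ℝ := (N.descFactorial N : ℝ) with hc0
  set c1 : ℝ := ((1 + N).descFactorial N : ℝ) with hc1
  set c2 : ℝ := ((2 + N).descFactorial N : ℝ) with hc2
  set E0 : ℝ := esymm n j lam
  set E1 : ℝ := esymm n (j + 1) lam
  set E2 : ℝ := esymm n (j + 2) lam
  have hcast : c1 * c1 ≤ 2 * c0 * c2 := by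
    rw [hc0, hc1, hc2]; exact_mod_cast hnat
  have hc0pos : (0:ℝ) < c0 := by
    rw [hc0, key0]; exact_mod_cast Nat.factorial_pos N
  have hc2pos : (0:ℝ) < c2 := by
    rw [hc2]
    have h : 0 < (2 + N).descFactorial N := by
      have := Nat.factorial_pos (2 + N); omega
    exact_mod_cast h
  have h2pos : (0:ℝ) < 2 * c0 * c2 := by positivity
  have hA : (2 * c0 * c2) * (E0 * E2) ≤ c1 ^ 2 * E1 ^ 2 := by nlinarith [hkeyQ]
  have hB : c1 ^ 2 * E1 ^ 2 ≤ (2 * c0 * c2) * E1 ^ 2 := by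
    have h : c1 ^ 2 ≤ 2 * c0 * c2 := by nlinarith [hcast]
    exact mul_le_mul_of_nonneg_right h (sq_nonneg E1)
  exact le_of_mul_le_mul_left (hA.trans hB) h2pos

end NewtonIneq

lemma esymm_zero_eq_one (n : ℕ) (lam : Fin n → ℝ) : esymm n 0 lam = 1 := by
  simp [esymm]

/-- Lemma 2.13, inequality (2.10): for all `b, B > 0` there is `C > 0` depending
only on `n, k, b, B` such that whenever `λ ∈ Γ_{k-1}` solves the equation
`σ_k/σ_{k-1} = ∑_{l=0}^{k-2} β_l σ_l/σ_{k-1} + β_{k-1}` with `b ≤ β_l ≤ B` for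
`0 ≤ l ≤ k−2` and `|β_{k-1}| ≤ B`, then `−B ≤ σ_k/σ_{k-1} ≤ C`. -/
theorem main_ratio_bound (n k : ℕ) (hn : 2 ≤ n) (hk : 2 ≤ k) (hkn : k ≤ n)
    (b B : ℝ) (hb : 0 < b) (hB : 0 < B) :
    ∃ C > (0 : ℝ), ∀ lam ∈ GammaCone n (k - 1), ∀ β : ℕ → ℝ,
      (∀ l ≤ k - 2, b ≤ β l ∧ β l ≤ B) → ∀ βlast : ℝ, |βlast| ≤ B →
      esymm n k lam / esymm n (k - 1) lam
          = (∑ l ∈ Finset.range (k - 1), β l * (esymm n l lam / esymm n (k - 1) lam))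
            + βlast →
      -B ≤ esymm n k lam / esymm n (k - 1) lam ∧
      esymm n k lam / esymm n (k - 1) lam ≤ C := by
  obtain ⟨m, rfl⟩ : ∃ m, k = m + 2 := ⟨k - 2, by omega⟩
  have hCpos : (0:ℝ) < B * (m + 2 : ℕ) + 1 := by
    have h1 : (0:ℝ) ≤ ((m + 2 : ℕ) : ℝ) := Nat.cast_nonneg _
    nlinarith
  refine ⟨B * (m + 2 : ℕ) + 1, hCpos, ?_⟩
  intro lam hlam β hβ βlast hβlast heq
  simp only [show m + 2 - 1 = m + 1 from rfl, show m + 2 - 2 = m from rfl] at hlam hβ heq ⊢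
  have hpos : ∀ j, 1 ≤ j → j ≤ m + 1 → 0 < esymm n j lam := fun j h1 h2 => hlam j h1 h2
  have hposK : 0 < esymm n (m + 1) lam := hpos _ (by omega) le_rfl
  have hnn : ∀ j, j ≤ m + 1 → 0 ≤ esymm n j lam := by
    intro j hjm
    rcases Nat.eq_zero_or_pos j with h | h
    · rw [h, esymm_zero_eq_one]; norm_num
    · exact (hpos j h hjm).le
  have newton : ∀ j, j + 2 ≤ n → esymm n j lam * esymm n (j + 2) lam ≤ esymm n (j + 1) lam ^ 2 :=
    fun j hjn => esymm_newton n lam j hjn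
  have habs := abs_le.mp hβlast
  constructor
  · -- lower bound
    rw [heq]
    have hsum : 0 ≤ ∑ l ∈ Finset.range (m + 1), β l * (esymm n l lam / esymm n (m + 1) lam) := by
      apply Finset.sum_nonneg
      intro l hl
      rw [Finset.mem_range] at hl
      have hbl := hβ l (by omega)
      have hdiv : 0 ≤ esymm n l lam / esymm n (m + 1) lam :=
        div_nonneg (hnn l (by omega)) hposK.le
      have hβl : 0 ≤ β l := le_trans hb.le hbl.1
      exact mul_nonneg hβl hdiv
    linarith
  · -- upper bound
    by_cases hc : esymm n m lam ≤ esymm n (m + 1) lam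
    · -- monotone chain: all E_l ≤ E_{m+1}
      have step : ∀ i, i ≤ m → esymm n (m - i) lam ≤ esymm n (m - i + 1) lam := by
        intro i
        induction i with
        | zero => intro _; simpa using hc
        | succ i ih =>
          intro hi
          have hih := ih (by omega)
          have hj1 : m - (i + 1) + 1 = m - i := by omega
          have hj2 : m - (i + 1) + 2 = m - i + 1 := by omega
          have hnew := newton (m - (i + 1)) (by omega)
          rw [hj1, hj2] at hnew
          have hp1 : 0 < esymm n (m - i) lam := hpos _ (by omega) (by omega)
          have hp2 : 0 < esymm n (m - i + 1) lam := hpos _ (by omega) (by omega)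
          rw [hj1]
          nlinarith [hnew, mul_le_mul_of_nonneg_left hih hp1.le]
      have stepj : ∀ j, j ≤ m → esymm n j lam ≤ esymm n (j + 1) lam := by
        intro j hjm
        have h := step (m - j) (by omega)
        rw [show m - (m - j) = j by omega] at h
        exact h
      have hle : ∀ l, l ≤ m + 1 → esymm n l lam ≤ esymm n (m + 1) lam := by
        intro l hl
        have key : ∀ d, ∀ l, l + d ≤ m + 1 → esymm n l lam ≤ esymm n (l + d) lam := by
          intro d
          induction d with
          | zero => intro l _; simp
          | succ d ih =>
            intro l hld
            have h1 := ih l (by omega)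
            have h2 := stepj (l + d) (by omega)
            calc esymm n l lam ≤ esymm n (l + d) lam := h1
              _ ≤ esymm n (l + d + 1) lam := h2
              _ = esymm n (l + (d + 1)) lam := by ring_nf
        have := key (m + 1 - l) l (by omega)
        rw [show l + (m + 1 - l) = m + 1 by omega] at this
        exact this
      rw [heq]
      have hsum_le : ∑ l ∈ Finset.range (m + 1), β l * (esymm n l lam / esymm n (m + 1) lam)
          ≤ (m + 1 : ℕ) * B := by
        have h := Finset.sum_le_sum (f := fun l => β l * (esymm n l lam / esymm n (m + 1) lam))
          (g := fun _ => B) (s := Finset.range (m + 1)) ?_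
        · simpa [Finset.sum_const, Finset.card_range, nsmul_eq_mul] using h
        · intro l hl
          rw [Finset.mem_range] at hl
          have hbl := hβ l (by omega)
          have hd1 : esymm n l lam / esymm n (m + 1) lam ≤ 1 := by
            rw [div_le_one hposK]
            exact hle l (by omega)
          have hd0 : 0 ≤ esymm n l lam / esymm n (m + 1) lam :=
            div_nonneg (hnn l (by omega)) hposK.le
          calc β l * (esymm n l lam / esymm n (m + 1) lam) ≤ B * 1 :=
            mul_le_mul hbl.2 hd1 hd0 hB.le
            _ = B := mul_one B
      have hcast : ((m + 1 : ℕ) : ℝ) + 1 = ((m + 2 : ℕ) : ℝ) := by push_cast; ring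
      calc (∑ l ∈ Finset.range (m + 1), β l * (esymm n l lam / esymm n (m + 1) lam)) + βlast
          ≤ (m + 1 : ℕ) * B + B := by linarith [habs.2]
        _ ≤ B * ((m + 2 : ℕ) : ℝ) + 1 := by push_cast; nlinarith
    · -- E_{m+1} < E_m : the ratio is at most 1
      push_neg at hc
      have hposm : 0 < esymm n m lam := by
        rcases Nat.eq_zero_or_pos m with h | h
        · rw [h, esymm_zero_eq_one]; norm_num
        · exact hpos m h (by omega)
      have hnew := newton m (by omega)
      have ht : esymm n (m + 2) lam / esymm n (m + 1) lam ≤ 1 := by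
        rw [div_le_one hposK]
        nlinarith [hnew, mul_pos hposK (sub_pos.mpr hc), hposm, hposK]
      have h1 : (1:ℝ) ≤ B * ((m + 2 : ℕ) : ℝ) + 1 := by
        have : (0:ℝ) ≤ ((m + 2 : ℕ) : ℝ) := Nat.cast_nonneg _
        nlinarith
      linarith
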